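/- Let π ∈ NC_{1,2}(m) and consider products of Jucys-Murphy transpositions a_1⋯a_m with equality partition π. If {p,r} is a two-element block of π, then none of the elements α_p, α_{p+1}, ..., α_r appears in any of the transpositions a_1,...,a_{p-1}, a_{r+1},...,a_m. -/
import Mathlib


namespace JM

/-- A collection of sets is a partition of `Fin m`. -/
def IsPartitionOn {m : ℕ} (π : Set (Set (Fin m))) : Prop :=
  (∀ B ∈ π, B.Nonempty) ∧ (∀ x : Fin m, ∃ B ∈ π, x ∈ B) ∧
  (∀ B ∈ π, ∀ B' ∈ π, (B ∩ B').Nonempty → B = B')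

/-- The partition is non-crossing. -/
def Noncrossing {m : ℕ} (π : Set (Set (Fin m))) : Prop :=
  ∀ B ∈ π, ∀ B' ∈ π, B ≠ B' →
    ¬ ∃ k1 l1 k2 l2 : Fin m, k1 < l1 ∧ l1 < k2 ∧ k2 < l2 ∧
      k1 ∈ B ∧ k2 ∈ B ∧ l1 ∈ B' ∧ l2 ∈ B'

/-- `B` is an inner block of `B'`. -/
def Inner {m : ℕ} (B B' : Set (Fin m)) : Prop :=
  (∃ p ∈ B', ∀ b ∈ B, p < b) ∧ (∃ q ∈ B', ∀ b ∈ B, b < q)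

/-- `B` is a direct inner block of `B''` in π. -/
def DirectInner {m : ℕ} (π : Set (Set (Fin m))) (B B'' : Set (Fin m)) : Prop :=
  Inner B B'' ∧ ¬ ∃ B' ∈ π, Inner B B' ∧ Inner B' B''

/-- Non-crossing partitions with blocks of size 1 or 2, each singleton inner to a 2-block. -/
def NC1lt2 (m : ℕ) : Set (Set (Set (Fin m))) :=
  {π | IsPartitionOn π ∧ Noncrossing π ∧ (∀ B ∈ π, B.ncard = 1 ∨ B.ncard = 2) ∧
    ∀ B ∈ π, B.ncard = 1 → ∃ B' ∈ π, B'.ncard = 2 ∧ Inner B B'}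

/-- Non-crossing partitions all of whose blocks have size at least two. -/
def NCge2 (m : ℕ) : Set (Set (Set (Fin m))) :=
  {π | IsPartitionOn π ∧ Noncrossing π ∧ ∀ B ∈ π, 2 ≤ B.ncard}

/-- The merging map `F`: each 2-block is merged with its direct inner singletons. -/
def Fmap {m : ℕ} (π : Set (Set (Fin m))) : Set (Set (Fin m)) :=
  {C | ∃ B ∈ π, B.ncard = 2 ∧
    C = B ∪ {x | ∃ S ∈ π, S = {x} ∧ DirectInner π S B}}

/-- The splitting map `G`: from each block of size at least 3, every element except the
minimum and the maximum is placed in its own singleton block. -/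
def Gmap {m : ℕ} (π : Set (Set (Fin m))) : Set (Set (Fin m)) :=
  {C | (∃ B ∈ π, B.ncard ≤ 2 ∧ C = B) ∨
    (∃ B ∈ π, 3 ≤ B.ncard ∧ ∃ x ∈ B, (∃ y ∈ B, y < x) ∧ (∃ z ∈ B, x < z) ∧ C = {x}) ∨
    (∃ B ∈ π, 3 ≤ B.ncard ∧ ∃ y ∈ B, ∃ z ∈ B,
      (∀ b ∈ B, y ≤ b) ∧ (∀ b ∈ B, b ≤ z) ∧ C = {y, z})}

/-- Minimal number of transpositions needed to write σ as a product. -/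
noncomputable def permLength {β : Type*} [DecidableEq β] [Fintype β] (σ : Equiv.Perm β) : ℕ :=
  sInf {k | ∃ l : List (Equiv.Perm β), l.length = k ∧ (∀ t ∈ l, t.IsSwap) ∧ l.prod = σ}

/-- The element 2n+1 of {1,…,2n+1}. -/
def jmTop (n : ℕ) : Fin (2*n+1) := Fin.last (2*n)

/-- The tuple of Jucys-Murphy transpositions (αᵢ, 2n+1). -/
def jmTuple {n m : ℕ} (α : Fin m → Fin (2*n+1)) : Fin m → Equiv.Perm (Fin (2*n+1)) :=
  fun i => Equiv.swap (α i) (jmTop n)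

/-- The partition of indices grouping equal values of α. -/
def eqPartition {m : ℕ} {β : Type*} (α : Fin m → β) : Set (Set (Fin m)) :=
  {B | ∃ j : Fin m, B = {i | α i = α j}}

/-- A partition respects a two-coloring. -/
def Respects {m : ℕ} (π : Set (Set (Fin m))) (c : Fin m → Bool) : Prop :=
  ∀ B ∈ π, ∀ i ∈ B, ∀ j ∈ B, c i = c j

/-- Membership in the subgroup S_n × S_n × {e} of S_{2n+1}. -/
def InH (n : ℕ) (σ : Equiv.Perm (Fin (2*n+1))) : Prop :=
  (∀ x : Fin (2*n+1), (x:ℕ) < n → ((σ x : Fin (2*n+1)) : ℕ) < n) ∧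
  (∀ x : Fin (2*n+1), n ≤ (x:ℕ) → (x:ℕ) < 2*n →
    n ≤ ((σ x : Fin (2*n+1)) : ℕ) ∧ ((σ x : Fin (2*n+1)) : ℕ) < 2*n) ∧
  σ (jmTop n) = jmTop n

def e1 (n : ℕ) : Fin n ≃ {x : Fin (2*n+1) // (x:ℕ) < n} where
  toFun i := ⟨⟨i, by omega⟩, i.isLt⟩
  invFun x := ⟨(x.1 : ℕ), x.2⟩
  left_inv i := rfl
  right_inv x := rfl

def e2 (n : ℕ) : Fin n ≃ {x : Fin (2*n+1) // n ≤ (x:ℕ) ∧ (x:ℕ) < 2*n} where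
  toFun i := ⟨⟨n + i, by omega⟩, by simp only [Fin.val_mk]; omega⟩
  invFun x := ⟨(x.1 : ℕ) - n, by have := x.2; omega⟩
  left_inv i := by ext; simp
  right_inv x := by
    rcases x with ⟨x, hx⟩
    exact Subtype.ext (Fin.ext (by simp; omega))

/-- Embed a permutation of `Fin n` as a permutation of `Fin (2n+1)` acting on {1,…,n}. -/
def lift1 {n : ℕ} (τ : Equiv.Perm (Fin n)) : Equiv.Perm (Fin (2*n+1)) :=
  τ.extendDomain (e1 n)

/-- Embed a permutation of `Fin n` as a permutation of `Fin (2n+1)` acting on {n+1,…,2n}. -/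
def lift2 {n : ℕ} (τ : Equiv.Perm (Fin n)) : Equiv.Perm (Fin (2*n+1)) :=
  τ.extendDomain (e2 n)

/-- for a two-element block {p,r} of a non-crossing partition with blocks of
size one or two, no α-value occurring between p and r occurs outside [p,r]. -/
theorem separation (n m : ℕ) (α : Fin m → Fin (2*n+1))
    (hα : ∀ i, α i ≠ jmTop n)
    (hnc : Noncrossing (eqPartition α))
    (hsize : ∀ B ∈ eqPartition α, B.ncard = 1 ∨ B.ncard = 2)
    (p r : Fin m) (hpr : p < r) (hblock : α p = α r)
    (hexact : ∀ j, α j = α p → j = p ∨ j = r) :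
    ∀ i s : Fin m, (i < p ∨ r < i) → p ≤ s → s ≤ r → α i ≠ α s := by
  intro i s hi hps hsr heq
  -- s is strictly between p and r
  have hsp : α s ≠ α p := by
    intro h
    rcases hexact i (heq.trans h) with rfl | rfl
    · rcases hi with h' | h'
      · exact lt_irrefl _ h'
      · exact absurd (h'.trans hpr) (lt_irrefl _)
    · rcases hi with h' | h'
      · exact absurd (hpr.trans h') (lt_irrefl _)
      · exact lt_irrefl _ h'
  have hsp' : s ≠ p := fun h => hsp (by rw [h])
  have hsr' : s ≠ r := fun h => hsp (by rw [h, ← hblock])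
  have hps2 : p < s := lt_of_le_of_ne hps (Ne.symm hsp')
  have hsr2 : s < r := lt_of_le_of_ne hsr hsr'
  set B : Set (Fin m) := {j | α j = α p} with hB
  set B' : Set (Fin m) := {j | α j = α s} with hB'
  have hBmem : B ∈ eqPartition α := ⟨p, rfl⟩
  have hB'mem : B' ∈ eqPartition α := ⟨s, rfl⟩
  have hne : B' ≠ B := by
    intro h
    have : s ∈ B' := rfl
    rw [h] at this
    rcases hexact s this with rfl | rfl
    · exact hsp' rfl
    · exact hsr' rfl
  have hpB : p ∈ B := rfl
  have hrB : r ∈ B := hblock.symm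
  have hsB' : s ∈ B' := rfl
  have hiB' : i ∈ B' := heq
  rcases hi with h' | h'
  · exact hnc B' hB'mem B hBmem hne ⟨i, p, s, r, h', hps2, hsr2, hiB', hsB', hpB, hrB⟩
  · exact hnc B hBmem B' hB'mem hne.symm ⟨p, s, r, i, hps2, hsr2, h', hpB, hrB, hsB', hiB'⟩

end JM
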